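/- Let S = k[x_1,…,x_a,y_1,…,y_b] with a ≥ 1, b ≥ 1, and I the edge ideal of K_a ∨ K̄_b. Then I is a radical ideal and its associated primes are exactly p_0 = (x_1,…,x_a) and p_i = (x_1,…,x̂_i,…,x_a,y_1,…,y_b) for 1 ≤ i ≤ a. -/

import Mathlib

open MvPolynomial

/-- The edge ideal of the complete split graph `K_a ∨ K̄_b`. -/
noncomputable def splitEdgeIdeal (k : Type*) [Field k] (a b : ℕ) :
    Ideal (MvPolynomial (Fin a ⊕ Fin b) k) :=
  Ideal.span
    ({p | ∃ i j : Fin a, i < j ∧ p = X (Sum.inl i) * X (Sum.inl j)} ∪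
     {p | ∃ (i : Fin a) (t : Fin b), p = X (Sum.inl i) * X (Sum.inr t)})

noncomputable section AuxVarIdeal

open scoped Classical

variable {k : Type*} [Field k] {σ : Type*}

/-- The algebra map killing the variables in `s`. -/
def killVars (k : Type*) [Field k] (s : Set σ) :
    MvPolynomial σ k →ₐ[k] MvPolynomial σ k :=
  aeval (fun v => if v ∈ s then 0 else X v)

lemma killVars_X (s : Set σ) (v : σ) :
    killVars k s (X v) = if v ∈ s then 0 else X v := by
  simp [killVars]

lemma sub_killVars_mem (s : Set σ) (f : MvPolynomial σ k) :
    f - killVars k s f ∈ Ideal.span (X '' s) := by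
  induction f using MvPolynomial.induction_on with
  | C c => simp
  | add p q hp hq =>
    have : p + q - killVars k s (p + q) = (p - killVars k s p) + (q - killVars k s q) := by
      rw [map_add]; ring
    rw [this]; exact add_mem hp hq
  | mul_X p v hp =>
    rw [map_mul, killVars_X]
    by_cases hv : v ∈ s
    · rw [if_pos hv, mul_zero, sub_zero]
      exact Ideal.mul_mem_left _ p (Ideal.subset_span ⟨v, hv, rfl⟩)
    · rw [if_neg hv]
      have : p * X v - killVars k s p * X v = (p - killVars k s p) * X v := by ring
      rw [this]
      exact Ideal.mul_mem_right _ _ hp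

lemma mem_span_vars_iff (s : Set σ) (f : MvPolynomial σ k) :
    f ∈ Ideal.span (X '' s) ↔ killVars k s f = 0 := by
  constructor
  · intro hf
    have : Ideal.span (X '' s) ≤ RingHom.ker (killVars k s).toRingHom := by
      rw [Ideal.span_le]
      rintro p ⟨v, hv, rfl⟩
      simp [RingHom.mem_ker, killVars_X, hv]
    exact this hf
  · intro hf
    have := sub_killVars_mem (k := k) s f
    rwa [hf, sub_zero] at this

lemma span_vars_isPrime (s : Set σ) :
    (Ideal.span (X '' s) : Ideal (MvPolynomial σ k)).IsPrime := by
  have : (Ideal.span (X '' s) : Ideal (MvPolynomial σ k)) =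
      RingHom.ker (killVars k s).toRingHom := by
    ext f
    rw [mem_span_vars_iff]; rfl
  rw [this]
  exact RingHom.ker_isPrime _

lemma X_mem_span_vars_iff (s : Set σ) (v : σ) :
    (X v : MvPolynomial σ k) ∈ Ideal.span (X '' s) ↔ v ∈ s := by
  rw [mem_span_vars_iff, killVars_X]
  by_cases hv : v ∈ s <;> simp [hv, X_ne_zero]

lemma span_mul_mem {T : Set (MvPolynomial σ k)} {I : Ideal (MvPolynomial σ k)}
    {m f : MvPolynomial σ k} (hT : ∀ g ∈ T, g * m ∈ I) (hf : f ∈ Ideal.span T) :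
    f * m ∈ I := by
  induction hf using Submodule.span_induction with
  | mem g hg => exact hT g hg
  | zero => simp
  | add g h _ _ hg hh => rw [add_mul]; exact add_mem hg hh
  | smul r g _ hg => rw [smul_eq_mul, mul_assoc]; exact I.mul_mem_left r hg

end AuxVarIdeal

noncomputable section SplitAux

open scoped Classical

variable (a b : ℕ)

/-- The variable set of `p₀`. -/
def sVar0 : Set (Fin a ⊕ Fin b) := Set.range Sum.inl

/-- The variable set of `p_i`. -/
def sVarX (i : Fin a) : Set (Fin a ⊕ Fin b) := {v | v ≠ Sum.inl i}

variable (k : Type*) [Field k]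

/-- The family of the (conjecturally) associated primes, indexed by `Option (Fin a)`. -/
def splitPrime (o : Option (Fin a)) : Ideal (MvPolynomial (Fin a ⊕ Fin b) k) :=
  Ideal.span (X '' (o.elim (sVar0 a b) (sVarX a b)))

variable {a b k}

lemma mem_split_of_ne {i j : Fin a} (h : i ≠ j) :
    (X (Sum.inl i) * X (Sum.inl j) : MvPolynomial (Fin a ⊕ Fin b) k) ∈ splitEdgeIdeal k a b := by
  rcases lt_or_gt_of_ne h with hij | hij
  · exact Ideal.subset_span (Or.inl ⟨i, j, hij, rfl⟩)
  · rw [mul_comm]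
    exact Ideal.subset_span (Or.inl ⟨j, i, hij, rfl⟩)

lemma mem_split_xy (i : Fin a) (t : Fin b) :
    (X (Sum.inl i) * X (Sum.inr t) : MvPolynomial (Fin a ⊕ Fin b) k) ∈ splitEdgeIdeal k a b := by
  exact Ideal.subset_span (Or.inr ⟨i, t, rfl⟩)

lemma split_le_prime (o : Option (Fin a)) :
    splitEdgeIdeal k a b ≤ splitPrime a b k o := by
  rw [splitEdgeIdeal, Ideal.span_le]
  rintro p (⟨i, j, hij, rfl⟩ | ⟨i, t, rfl⟩)
  · cases o with
    | none =>
      exact Ideal.mul_mem_right _ _ (Ideal.subset_span ⟨Sum.inl i, ⟨i, rfl⟩, rfl⟩)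
    | some l =>
      by_cases hi : i = l
      · subst hi
        refine Ideal.mul_mem_left _ _ (Ideal.subset_span ⟨Sum.inl j, ?_, rfl⟩)
        simp only [splitPrime, Option.elim, sVarX, Set.mem_setOf_eq]
        exact fun hc => absurd (Sum.inl.inj hc) hij.ne'
      · refine Ideal.mul_mem_right _ _ (Ideal.subset_span ⟨Sum.inl i, ?_, rfl⟩)
        simp only [splitPrime, Option.elim, sVarX, Set.mem_setOf_eq]
        exact fun hc => hi (Sum.inl.inj hc)
  · cases o with
    | none =>
      exact Ideal.mul_mem_right _ _ (Ideal.subset_span ⟨Sum.inl i, ⟨i, rfl⟩, rfl⟩)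
    | some l =>
      refine Ideal.mul_mem_left _ _ (Ideal.subset_span ⟨Sum.inr t, ?_, rfl⟩)
      simp [splitPrime, sVarX]

lemma inl_mem_sVar0 (i : Fin a) : (Sum.inl i : Fin a ⊕ Fin b) ∈ sVar0 a b := ⟨i, rfl⟩

lemma inr_not_mem_sVar0 (t : Fin b) : (Sum.inr t : Fin a ⊕ Fin b) ∉ sVar0 a b := by
  rintro ⟨i, h⟩; exact Sum.inl_ne_inr h

lemma mem_sVarX_iff (v : Fin a ⊕ Fin b) (i : Fin a) :
    v ∈ sVarX a b i ↔ v ≠ Sum.inl i := Iff.rfl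

/-- anything in `p_i` times `x_i` lies in the edge ideal. -/
lemma mul_xi_mem {f : MvPolynomial (Fin a ⊕ Fin b) k} (i : Fin a)
    (hf : f ∈ splitPrime a b k (some i)) :
    f * X (Sum.inl i) ∈ splitEdgeIdeal k a b := by
  refine span_mul_mem ?_ hf
  rintro g ⟨v, hv, rfl⟩
  rcases v with j | t
  · exact mem_split_of_ne (fun hc => hv (by rw [hc]))
  · rw [mul_comm]; exact mem_split_xy i t

/-- anything in `p₀` times `y_t` lies in the edge ideal. -/
lemma mul_yt_mem {f : MvPolynomial (Fin a ⊕ Fin b) k} (t : Fin b)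
    (hf : f ∈ splitPrime a b k none) :
    f * X (Sum.inr t) ∈ splitEdgeIdeal k a b := by
  refine span_mul_mem ?_ hf
  rintro g ⟨v, ⟨i, rfl⟩, rfl⟩
  exact mem_split_xy i t

/-- The key decomposition lemma. -/
lemma decomp_mem (f : MvPolynomial (Fin a ⊕ Fin b) k) :
    f - killVars k (sVar0 a b) f -
      ∑ i : Fin a, (killVars k (sVarX a b i) f - killVars k Set.univ f) ∈
      splitEdgeIdeal k a b := by
  induction f using MvPolynomial.induction_on with
  | C c =>
    simp
  | add p q hp hq =>
    have hs : ∀ i : Fin a, killVars k (sVarX a b i) (p + q) - killVars k Set.univ (p + q) =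
        (killVars k (sVarX a b i) p - killVars k Set.univ p) +
        (killVars k (sVarX a b i) q - killVars k Set.univ q) := by
      intro i; rw [map_add, map_add]; ring
    have : p + q - killVars k (sVar0 a b) (p + q) -
        ∑ i : Fin a, (killVars k (sVarX a b i) (p + q) - killVars k Set.univ (p + q)) =
        (p - killVars k (sVar0 a b) p -
          ∑ i : Fin a, (killVars k (sVarX a b i) p - killVars k Set.univ p)) +
        (q - killVars k (sVar0 a b) q -
          ∑ i : Fin a, (killVars k (sVarX a b i) q - killVars k Set.univ q)) := by
      simp_rw [hs]
      rw [map_add, Finset.sum_add_distrib]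
      ring
    rw [this]; exact add_mem hp hq
  | mul_X p v _ =>
    rcases v with j | t
    · have h0 : killVars k (sVar0 a b) (p * X (Sum.inl j)) = 0 := by
        rw [map_mul, killVars_X, if_pos (inl_mem_sVar0 j), mul_zero]
      have hu : killVars k Set.univ (p * X (Sum.inl j) : MvPolynomial (Fin a ⊕ Fin b) k) = 0 := by
        rw [map_mul, killVars_X, if_pos (Set.mem_univ _), mul_zero]
      have hsum : ∑ i : Fin a, (killVars k (sVarX a b i) (p * X (Sum.inl j)) -
          killVars k Set.univ (p * X (Sum.inl j))) =
          killVars k (sVarX a b j) p * X (Sum.inl j) := by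
        rw [Finset.sum_eq_single j]
        · rw [hu, sub_zero, map_mul, killVars_X, if_neg]
          simp [mem_sVarX_iff]
        · intro i _ hij
          rw [hu, sub_zero, map_mul, killVars_X, if_pos, mul_zero]
          rw [mem_sVarX_iff]
          exact fun hc => hij (Sum.inl.inj hc).symm
        · intro h; exact absurd (Finset.mem_univ j) h
      rw [h0, hsum, sub_zero]
      have : p * X (Sum.inl j) - killVars k (sVarX a b j) p * X (Sum.inl j) =
          (p - killVars k (sVarX a b j) p) * X (Sum.inl j) := by ring
      rw [this]
      exact mul_xi_mem j (sub_killVars_mem _ p)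
    · have h0 : killVars k (sVar0 a b) (p * X (Sum.inr t)) =
          killVars k (sVar0 a b) p * X (Sum.inr t) := by
        rw [map_mul, killVars_X, if_neg (inr_not_mem_sVar0 t)]
      have hu : killVars k Set.univ (p * X (Sum.inr t) : MvPolynomial (Fin a ⊕ Fin b) k) = 0 := by
        rw [map_mul, killVars_X, if_pos (Set.mem_univ _), mul_zero]
      have hi : ∀ i : Fin a, killVars k (sVarX a b i) (p * X (Sum.inr t)) = 0 := by
        intro i
        rw [map_mul, killVars_X, if_pos, mul_zero]
        rw [mem_sVarX_iff]
        exact Sum.inr_ne_inl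
      have hsum : ∑ i : Fin a, (killVars k (sVarX a b i) (p * X (Sum.inr t)) -
          killVars k Set.univ (p * X (Sum.inr t))) = 0 := by
        simp [hi, hu]
      rw [h0, hsum, sub_zero]
      have : p * X (Sum.inr t) - killVars k (sVar0 a b) p * X (Sum.inr t) =
          (p - killVars k (sVar0 a b) p) * X (Sum.inr t) := by ring
      rw [this]
      exact mul_yt_mem t (sub_killVars_mem _ p)

lemma split_eq_inf :
    splitEdgeIdeal k a b = (Finset.univ : Finset (Option (Fin a))).inf (splitPrime a b k) := by
  refine le_antisymm (Finset.le_inf fun o _ => split_le_prime o) ?_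
  intro f hf
  rw [Submodule.mem_finsetInf] at hf
  have h0 : killVars k (sVar0 a b) f = 0 :=
    (mem_span_vars_iff _ _).mp (hf none (Finset.mem_univ _))
  have hx : ∀ i : Fin a, killVars k (sVarX a b i) f = 0 := fun i =>
    (mem_span_vars_iff _ _).mp (hf (some i) (Finset.mem_univ _))
  have hu : killVars k Set.univ f = 0 := by
    refine (mem_span_vars_iff _ _).mp ?_
    exact Ideal.span_mono (Set.image_mono (Set.subset_univ _)) (hf none (Finset.mem_univ _))
  have := decomp_mem (k := k) f
  simpa [h0, hx, hu] using this

lemma splitPrime_isPrime (o : Option (Fin a)) : (splitPrime a b k o).IsPrime :=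
  span_vars_isPrime _

lemma splitPrime_le_iff (hb : 1 ≤ b) {o o' : Option (Fin a)}
    (h : splitPrime a b k o ≤ splitPrime a b k o') : o = o' := by
  rcases o with _ | i <;> rcases o' with _ | i'
  · rfl
  · exact absurd ((X_mem_span_vars_iff _ _).mp
      (h ((X_mem_span_vars_iff _ _).mpr (inl_mem_sVar0 i')))) (by simp [mem_sVarX_iff])
  · exact absurd ((X_mem_span_vars_iff _ _).mp
      (h ((X_mem_span_vars_iff _ _).mpr
        ((mem_sVarX_iff (Sum.inr ⟨0, hb⟩) i).mpr Sum.inr_ne_inl))))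
      (inr_not_mem_sVar0 _)
  · by_cases hii : i = i'
    · rw [hii]
    · exact absurd ((X_mem_span_vars_iff _ _).mp
        (h ((X_mem_span_vars_iff _ _).mpr
          ((mem_sVarX_iff (Sum.inl i') i).mpr (fun hc => hii (Sum.inl.inj hc).symm)))))
        (by simp [mem_sVarX_iff])

/-- The colon computation: `(I : w_o) = p_o` where `w_o` is the witness monomial. -/
lemma colon_eq (hb : 1 ≤ b) (o : Option (Fin a)) (r : MvPolynomial (Fin a ⊕ Fin b) k) :
    r * X (o.elim (Sum.inr (⟨0, hb⟩ : Fin b)) Sum.inl) ∈ splitEdgeIdeal k a b ↔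
      r ∈ splitPrime a b k o := by
  constructor
  · intro h
    have h' := split_le_prime o h
    rw [splitPrime, mem_span_vars_iff, map_mul, killVars_X, if_neg] at h'
    · rcases mul_eq_zero.mp h' with h'' | h''
      · rw [splitPrime, mem_span_vars_iff]; exact h''
      · exact absurd h'' (X_ne_zero _)
    · rcases o with _ | i
      · exact inr_not_mem_sVar0 _
      · simp [mem_sVarX_iff]
  · intro h
    rcases o with _ | i
    · exact mul_yt_mem _ h
    · exact mul_xi_mem _ h

lemma splitPrime_isAssociated (hb : 1 ≤ b) (o : Option (Fin a)) :
    IsAssociatedPrime (splitPrime a b k o)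
      (MvPolynomial (Fin a ⊕ Fin b) k ⧸ splitEdgeIdeal k a b) := by
  refine isAssociatedPrime_iff.mpr ⟨splitPrime_isPrime o,
    Submodule.Quotient.mk (X (o.elim (Sum.inr (⟨0, hb⟩ : Fin b)) Sum.inl)), ?_⟩
  ext r
  rw [Submodule.mem_colon_singleton, Submodule.mem_bot, ← Submodule.Quotient.mk_smul, smul_eq_mul,
    Submodule.Quotient.mk_eq_zero]
  exact (colon_eq hb o r).symm

end SplitAux

/-- `I` is radical, and the associated primes of `S/I` are exactly
`p_0 = (x_1,…,x_a)` and `p_i = (x_1,…,x̂_i,…,x_a,y_1,…,y_b)`, `1 ≤ i ≤ a`. -/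
theorem stmt_8 (k : Type*) [Field k] (a b : ℕ) (ha : 1 ≤ a) (hb : 1 ≤ b) :
    (splitEdgeIdeal k a b).IsRadical ∧
    associatedPrimes (MvPolynomial (Fin a ⊕ Fin b) k)
        (MvPolynomial (Fin a ⊕ Fin b) k ⧸ splitEdgeIdeal k a b) =
      insert
        (Ideal.span {p : MvPolynomial (Fin a ⊕ Fin b) k |
            ∃ i : Fin a, p = X (Sum.inl i)})
        (Set.range fun i : Fin a =>
          Ideal.span
            ({p : MvPolynomial (Fin a ⊕ Fin b) k |
                ∃ j : Fin a, j ≠ i ∧ p = X (Sum.inl j)} ∪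
             {p | ∃ t : Fin b, p = X (Sum.inr t)})) := by
  have hset0 : {p : MvPolynomial (Fin a ⊕ Fin b) k | ∃ i : Fin a, p = X (Sum.inl i)} =
      X '' (sVar0 a b) := by
    ext p
    constructor
    · rintro ⟨i, rfl⟩; exact ⟨Sum.inl i, ⟨i, rfl⟩, rfl⟩
    · rintro ⟨v, ⟨i, rfl⟩, rfl⟩; exact ⟨i, rfl⟩
  have hsetX : ∀ i : Fin a,
      ({p : MvPolynomial (Fin a ⊕ Fin b) k | ∃ j : Fin a, j ≠ i ∧ p = X (Sum.inl j)} ∪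
        {p | ∃ t : Fin b, p = X (Sum.inr t)}) = X '' (sVarX a b i) := by
    intro i
    ext p
    constructor
    · rintro (⟨j, hj, rfl⟩ | ⟨t, rfl⟩)
      · exact ⟨Sum.inl j, fun hc => hj (Sum.inl.inj hc), rfl⟩
      · exact ⟨Sum.inr t, Sum.inr_ne_inl, rfl⟩
    · rintro ⟨v, hv, rfl⟩
      rcases v with j | t
      · exact Or.inl ⟨j, fun hc => hv (by rw [hc]), rfl⟩
      · exact Or.inr ⟨t, rfl⟩
  have hRHS : insert
        (Ideal.span {p : MvPolynomial (Fin a ⊕ Fin b) k |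
            ∃ i : Fin a, p = X (Sum.inl i)})
        (Set.range fun i : Fin a =>
          Ideal.span
            ({p : MvPolynomial (Fin a ⊕ Fin b) k |
                ∃ j : Fin a, j ≠ i ∧ p = X (Sum.inl j)} ∪
             {p | ∃ t : Fin b, p = X (Sum.inr t)})) =
      Set.range (splitPrime a b k) := by
    have hfun : (fun i : Fin a => Ideal.span
        (({p : MvPolynomial (Fin a ⊕ Fin b) k |
            ∃ j : Fin a, j ≠ i ∧ p = X (Sum.inl j)} ∪
          {p | ∃ t : Fin b, p = X (Sum.inr t)}))) =
        fun i => splitPrime a b k (some i) := by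
      funext i; rw [hsetX i]; rfl
    rw [hset0, hfun]
    ext J
    constructor
    · rintro (rfl | ⟨i, rfl⟩)
      · exact ⟨none, rfl⟩
      · exact ⟨some i, rfl⟩
    · rintro ⟨o, rfl⟩
      rcases o with _ | i
      · exact Or.inl rfl
      · exact Or.inr ⟨i, rfl⟩
  constructor
  · -- radicality
    intro r hr
    obtain ⟨n, hn⟩ := hr
    rw [split_eq_inf, Submodule.mem_finsetInf] at hn ⊢
    intro o ho
    exact (splitPrime_isPrime o).mem_of_pow_mem n (hn o ho)
  · rw [hRHS]
    ext J
    constructor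
    · intro hJ
      obtain ⟨hJp, x, rfl⟩ := isAssociatedPrime_iff.mp hJ
      obtain ⟨r, rfl⟩ := Submodule.Quotient.mk_surjective _ x
      have hJ_iff : ∀ z, z ∈ (⊥ : Submodule (MvPolynomial (Fin a ⊕ Fin b) k)
          (MvPolynomial (Fin a ⊕ Fin b) k ⧸ splitEdgeIdeal k a b)).colon
          {Submodule.Quotient.mk (p := splitEdgeIdeal k a b) r} ↔
          z * r ∈ splitEdgeIdeal k a b := by
        intro z
        rw [Submodule.mem_colon_singleton, Submodule.mem_bot, ← Submodule.Quotient.mk_smul,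
          smul_eq_mul, Submodule.Quotient.mk_eq_zero]
      set J := (⊥ : Submodule (MvPolynomial (Fin a ⊕ Fin b) k)
          (MvPolynomial (Fin a ⊕ Fin b) k ⧸ splitEdgeIdeal k a b)).colon
          {Submodule.Quotient.mk (p := splitEdgeIdeal k a b) r} with hJdef
      have hr : r ∉ splitEdgeIdeal k a b := by
        intro hrI
        exact hJp.ne_top (Ideal.eq_top_iff_one _ |>.mpr
          ((hJ_iff 1).mpr (by rwa [one_mul])))
      have hIJ : splitEdgeIdeal k a b ≤ J := fun z hz =>
        (hJ_iff z).mpr (Ideal.mul_mem_right _ _ hz)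
      have hinf : (Finset.univ : Finset (Option (Fin a))).inf (splitPrime a b k) ≤ J := by
        rw [← split_eq_inf]; exact hIJ
      obtain ⟨o, _, ho⟩ := (Ideal.IsPrime.inf_le' hJp).mp hinf
      obtain ⟨o', ho'⟩ : ∃ o', r ∉ splitPrime a b k o' := by
        by_contra hc
        push_neg at hc
        exact hr (by rw [split_eq_inf, Submodule.mem_finsetInf]; exact fun o _ => hc o)
      have hJle : J ≤ splitPrime a b k o' := by
        intro z hz
        have := split_le_prime o' ((hJ_iff z).mp hz)
        exact ((splitPrime_isPrime o').mem_or_mem this).resolve_right ho'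
      have : o = o' := splitPrime_le_iff hb (le_trans ho hJle)
      subst this
      exact ⟨o, le_antisymm ho hJle⟩
    · rintro ⟨o, rfl⟩
      exact splitPrime_isAssociated hb o
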